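/- arXiv:0706.2491 — 4 statements merged into one kernel-verified Lean document; each statement's English description precedes it below -/
import Mathlib

section
/- Let F : C → B and G : D → B be coverings of k-categories with C connected, and let J : B → B be an isomorphism of k-categories acting as the identity on objects. If H₁, H₂ : C → D are k-linear functors with G ∘ H₁ = J ∘ F and G ∘ H₂ = J ∘ F, and H₁ and H₂ coincide on some object of C, then H₁ = H₂. -/
open CategoryTheory

universe w v u

section CoveringDefs

variable (k : Type w) [CommRing k]

/-- A functor between `k`-linear categories is `k`-linear:
it is additive and commutes with the scalar action on morphisms. -/
def IsLinearFunctor {C : Type u} [Category.{v} C] [Preadditive C] [CategoryTheory.Linear k C]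
    {B : Type u} [Category.{v} B] [Preadditive B] [CategoryTheory.Linear k B]
    (F : C ⥤ B) : Prop :=
  (∀ (x y : C) (f g : x ⟶ y), F.map (f + g) = F.map f + F.map g) ∧
  (∀ (x y : C) (r : k) (f : x ⟶ y), F.map (r • f) = r • F.map f)

variable {C : Type u} [Category.{v} C] [Preadditive C] [CategoryTheory.Linear k C]
variable {B : Type u} [Category.{v} B] [Preadditive B] [CategoryTheory.Linear k B]

/-- The canonical map `⊕_{y ∈ F⁻¹(c)} C(x,y) →+ B(F(x),c)` induced by `F`
on the source star. -/
noncomputable def starOutHom (F : C ⥤ B) (hF : IsLinearFunctor k F) (x : C) (c : B) :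
    (DirectSum {y : C // F.obj y = c} (fun y => (x ⟶ y.1))) →+ (F.obj x ⟶ c) := by
  classical
  exact DirectSum.toAddMonoid fun y =>
    AddMonoidHom.mk' (fun f => F.map f ≫ eqToHom y.2)
      (fun f g => by (try simp only []); rw [hF.1 _ _ f g, Preadditive.add_comp])

/-- The canonical map `⊕_{y ∈ F⁻¹(c)} C(y,x) →+ B(c,F(x))` induced by `F`
on the target star. -/
noncomputable def starInHom (F : C ⥤ B) (hF : IsLinearFunctor k F) (x : C) (c : B) :
    (DirectSum {y : C // F.obj y = c} (fun y => (y.1 ⟶ x))) →+ (c ⟶ F.obj x) := by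
  classical
  exact DirectSum.toAddMonoid fun y =>
    AddMonoidHom.mk' (fun f => eqToHom y.2.symm ≫ F.map f)
      (fun f g => by (try simp only []); rw [hF.1 _ _ f g, Preadditive.comp_add])

/-- `F : C ⥤ B` is a covering of `k`-categories: it is a `k`-linear functor,
surjective on objects, inducing bijections on all source and target stars. -/
def IsCovering (F : C ⥤ B) : Prop :=
  ∃ hF : IsLinearFunctor k F,
    Function.Surjective F.obj ∧
    (∀ (x : C) (c : B), Function.Bijective (starOutHom k F hF x c)) ∧
    (∀ (x : C) (c : B), Function.Bijective (starInHom k F hF x c))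

end CoveringDefs

/-- A `k`-category is connected if the equivalence relation generated by
"there is a nonzero morphism from `x` to `y`" relates any two objects. -/
def IsConnectedKCat (C : Type u) [Category.{v} C] [Preadditive C] : Prop :=
  ∀ x y : C, Relation.EqvGen (fun a b : C => ∃ f : a ⟶ b, f ≠ 0) x y

section GaloisDefs

variable (k : Type w) [CommRing k]
variable {C : Type u} [Category.{v} C] [Preadditive C] [CategoryTheory.Linear k C]
variable {B : Type u} [Category.{v} B] [Preadditive B] [CategoryTheory.Linear k B]
variable {D : Type u} [Category.{v} D] [Preadditive D] [CategoryTheory.Linear k D]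

/-- `H` belongs to `Aut₁ F`: it is an invertible `k`-linear endofunctor with `F ∘ H = F`. -/
def MemAut1 (F : C ⥤ B) (H : C ⥤ C) : Prop :=
  IsLinearFunctor k H ∧
  (∃ Hinv : C ⥤ C, H ⋙ Hinv = 𝟭 C ∧ Hinv ⋙ H = 𝟭 C) ∧
  H ⋙ F = F

/-- A covering is Galois if its source is connected and `Aut₁ F` acts transitively
on some fibre. -/
def IsGaloisCovering (F : C ⥤ B) : Prop :=
  IsCovering k F ∧ IsConnectedKCat C ∧
  ∃ b₀ : B, ∀ x y : C, F.obj x = b₀ → F.obj y = b₀ →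
    ∃ H : C ⥤ C, MemAut1 k F H ∧ H.obj x = y

/-- A morphism `(H, J)` of coverings from `F : C ⥤ B` to `G : D ⥤ B`:
`H` and `J` are `k`-linear, `J` is an isomorphism which is the identity on objects,
and `G ∘ H = J ∘ F`. -/
def IsCoveringMorphism (F : C ⥤ B) (G : D ⥤ B) (H : C ⥤ D) (J : B ⥤ B) : Prop :=
  IsLinearFunctor k H ∧ IsLinearFunctor k J ∧
  (∃ Jinv : B ⥤ B, J ⋙ Jinv = 𝟭 B ∧ Jinv ⋙ J = 𝟭 B) ∧
  (∀ b : B, J.obj b = b) ∧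
  H ⋙ G = F ⋙ J

end GaloisDefs

/-- A universal covering: a Galois covering `U` such that for every Galois covering
`F : C ⥤ B` and every pair of objects `u₀`, `c₀` above the same object of `B`,
there is a unique `k`-linear functor `H` with `F ∘ H = U` and `H u₀ = c₀`. -/
def IsUniversalCovering (k : Type w) [CommRing k]
    {U' : Type u} [Category.{v} U'] [Preadditive U'] [CategoryTheory.Linear k U']
    {B : Type u} [Category.{v} B] [Preadditive B] [CategoryTheory.Linear k B]
    (U : U' ⥤ B) : Prop :=
  IsGaloisCovering k U ∧
  ∀ (C : Type u) [Category.{v} C] [Preadditive C] [CategoryTheory.Linear k C]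
    (F : C ⥤ B), IsGaloisCovering k F →
    ∀ (u₀ : U') (c₀ : C), U.obj u₀ = F.obj c₀ →
      ∃! H : U' ⥤ C, IsLinearFunctor k H ∧ H ⋙ F = U ∧ H.obj u₀ = c₀

/-- Given a functor `F : C ⥤ B`, a choice `x` of objects of `C` above each object of `B`,
and an endofunctor `H` of `C`, the subset `Z_H(c,b) = F(C(x_b, H x_c))` of `B(b,c)`. -/
def gradeSet {C : Type u} [Category.{v} C] {B : Type u} [Category.{v} B]
    (F : C ⥤ B) (x : B → C) (H : C ⥤ C) (b c : B) : Set (b ⟶ c) :=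
  {g | ∃ (h₁ : b = F.obj (x b)) (h₂ : F.obj (H.obj (x c)) = c)
        (f : x b ⟶ H.obj (x c)), g = eqToHom h₁ ≫ F.map f ≫ eqToHom h₂}

/-- The homogeneous component `Z_H(c,b)` as a `k`-submodule of `B(b,c)`. -/
noncomputable def gradeSubmodule (k : Type w) [CommRing k]
    {C : Type u} [Category.{v} C]
    {B : Type u} [Category.{v} B] [Preadditive B] [CategoryTheory.Linear k B]
    (F : C ⥤ B) (x : B → C) (H : C ⥤ C) (b c : B) : Submodule k (b ⟶ c) :=
  Submodule.span k (gradeSet F x H b c)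

theorem covering_morphisms_eq_of_agree_on_object (k : Type w) [CommRing k]
    {C : Type u} [Category.{v} C] [Preadditive C] [CategoryTheory.Linear k C]
    {B : Type u} [Category.{v} B] [Preadditive B] [CategoryTheory.Linear k B]
    {D : Type u} [Category.{v} D] [Preadditive D] [CategoryTheory.Linear k D]
    (F : C ⥤ B) (G : D ⥤ B) (hF : IsCovering k F) (hG : IsCovering k G)
    (hC : IsConnectedKCat C)
    (J : B ⥤ B) (hJlin : IsLinearFunctor k J)
    (hJinv : ∃ Jinv : B ⥤ B, J ⋙ Jinv = 𝟭 B ∧ Jinv ⋙ J = 𝟭 B)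
    (hJobj : ∀ b : B, J.obj b = b)
    (H₁ H₂ : C ⥤ D) (hH₁lin : IsLinearFunctor k H₁) (hH₂lin : IsLinearFunctor k H₂)
    (hH₁ : H₁ ⋙ G = F ⋙ J) (hH₂ : H₂ ⋙ G = F ⋙ J)
    (x : C) (hx : H₁.obj x = H₂.obj x) :
    H₁ = H₂ := by
  classical
  obtain ⟨hFlin, hFsurj, hFout, hFin⟩ := hF
  obtain ⟨hGlin, hGsurj, hGout, hGin⟩ := hG
  obtain ⟨Jinv, hJ1, hJ2⟩ := hJinv
  -- basic zero facts
  have hJ0 : ∀ {a b : B}, J.map (0 : a ⟶ b) = 0 := by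
    intro a b
    have := hJlin.2 a b 0 0
    simpa using this
  have hG0 : ∀ {a b : D}, G.map (0 : a ⟶ b) = 0 := by
    intro a b
    have := hGlin.2 a b 0 0
    simpa using this
  -- J is injective on morphisms
  have hJinj : ∀ {a b : B} (f : a ⟶ b), J.map f = 0 → f = 0 := by
    intro a b f h
    have h1 := Functor.congr_hom hJ1 f
    simp only [Functor.comp_map, Functor.id_map] at h1
    rw [h] at h1
    have h0 : Jinv.map (J.map (0 : a ⟶ b)) = eqToHom (Functor.congr_obj hJ1 a) ≫
        (0 : a ⟶ b) ≫ eqToHom (Functor.congr_obj hJ1 b).symm := by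
      have := Functor.congr_hom hJ1 (0 : a ⟶ b)
      simpa using this
    rw [hJ0] at h0
    rw [h0] at h1
    have := h1.symm
    calc f = eqToHom (Functor.congr_obj hJ1 a).symm ≫
          (eqToHom (Functor.congr_obj hJ1 a) ≫ f ≫ eqToHom (Functor.congr_obj hJ1 b).symm) ≫
          eqToHom (Functor.congr_obj hJ1 b) := by simp
      _ = 0 := by rw [← h1]; simp
  -- F does not kill nonzero morphisms
  have hFne : ∀ {a b : C} (f : a ⟶ b), F.map f = 0 → f = 0 := by
    intro a b f h
    have hinj := (hFout a (F.obj b)).1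
    have e1 : starOutHom k F hFlin a (F.obj b)
        (DirectSum.of (fun y : {y : C // F.obj y = F.obj b} => (a ⟶ y.1)) ⟨b, rfl⟩ f) =
        F.map f ≫ eqToHom rfl := by
      simp [starOutHom, DirectSum.toAddMonoid_of]
    rw [h] at e1
    simp only [eqToHom_refl, Limits.zero_comp] at e1
    have := hinj (e1.trans (map_zero (starOutHom k F hFlin a (F.obj b))).symm)
    have := DFinsupp.single_eq_zero.mp this
    exact this
  -- key injectivity lemma for the covering G, outgoing stars
  have key_out : ∀ (z : D) (c : B) (d₁ d₂ : D) (h₁ : G.obj d₁ = c) (h₂ : G.obj d₂ = c)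
      (f₁ : z ⟶ d₁) (f₂ : z ⟶ d₂),
      G.map f₁ ≫ eqToHom h₁ = G.map f₂ ≫ eqToHom h₂ → f₁ ≠ 0 →
      ∃ h : d₁ = d₂, f₂ = f₁ ≫ eqToHom h := by
    intro z c d₁ d₂ h₁ h₂ f₁ f₂ heq hne
    have hinj := (hGout z c).1
    have e1 : starOutHom k G hGlin z c
        (DirectSum.of (fun y : {y : D // G.obj y = c} => (z ⟶ y.1)) ⟨d₁, h₁⟩ f₁) =
        G.map f₁ ≫ eqToHom h₁ := by
      simp [starOutHom, DirectSum.toAddMonoid_of]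
    have e2 : starOutHom k G hGlin z c
        (DirectSum.of (fun y : {y : D // G.obj y = c} => (z ⟶ y.1)) ⟨d₂, h₂⟩ f₂) =
        G.map f₂ ≫ eqToHom h₂ := by
      simp [starOutHom, DirectSum.toAddMonoid_of]
    have := hinj (e1.trans (heq.trans e2.symm))
    have hsingle := (DFinsupp.single_eq_single_iff _ _ _ _).mp this
    rcases hsingle with ⟨hidx, hval⟩ | ⟨h0, _⟩
    · have hd : d₁ = d₂ := congrArg Subtype.val hidx
      subst hd
      refine ⟨rfl, ?_⟩
      simp [eq_of_heq hval.symm]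
    · exact absurd h0 hne
  -- key injectivity lemma for the covering G, incoming stars
  have key_in : ∀ (z : D) (c : B) (d₁ d₂ : D) (h₁ : G.obj d₁ = c) (h₂ : G.obj d₂ = c)
      (f₁ : d₁ ⟶ z) (f₂ : d₂ ⟶ z),
      eqToHom h₁.symm ≫ G.map f₁ = eqToHom h₂.symm ≫ G.map f₂ → f₁ ≠ 0 →
      ∃ h : d₁ = d₂, f₂ = eqToHom h.symm ≫ f₁ := by
    intro z c d₁ d₂ h₁ h₂ f₁ f₂ heq hne
    have hinj := (hGin z c).1
    have e1 : starInHom k G hGlin z c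
        (DirectSum.of (fun y : {y : D // G.obj y = c} => (y.1 ⟶ z)) ⟨d₁, h₁⟩ f₁) =
        eqToHom h₁.symm ≫ G.map f₁ := by
      simp [starInHom, DirectSum.toAddMonoid_of]
    have e2 : starInHom k G hGlin z c
        (DirectSum.of (fun y : {y : D // G.obj y = c} => (y.1 ⟶ z)) ⟨d₂, h₂⟩ f₂) =
        eqToHom h₂.symm ≫ G.map f₂ := by
      simp [starInHom, DirectSum.toAddMonoid_of]
    have := hinj (e1.trans (heq.trans e2.symm))
    have hsingle := (DFinsupp.single_eq_single_iff _ _ _ _).mp this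
    rcases hsingle with ⟨hidx, hval⟩ | ⟨h0, _⟩
    · have hd : d₁ = d₂ := congrArg Subtype.val hidx
      subst hd
      refine ⟨rfl, ?_⟩
      simp [eq_of_heq hval.symm]
    · exact absurd h0 hne
  -- objects of the fibres
  have hO₁ : ∀ a : C, G.obj (H₁.obj a) = F.obj a := fun a =>
    (Functor.congr_obj hH₁ a).trans (hJobj _)
  have hO₂ : ∀ a : C, G.obj (H₂.obj a) = F.obj a := fun a =>
    (Functor.congr_obj hH₂ a).trans (hJobj _)
  -- H₁ and H₂ do not kill nonzero morphisms
  have hH₁ne : ∀ {a b : C} (f : a ⟶ b), f ≠ 0 → H₁.map f ≠ 0 := by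
    intro a b f hf h0
    have h1 := Functor.congr_hom hH₁ f
    simp only [Functor.comp_map] at h1
    rw [h0, hG0] at h1
    have : J.map (F.map f) = 0 := by
      calc J.map (F.map f)
          = eqToHom (Functor.congr_obj hH₁ a).symm ≫
            (eqToHom (Functor.congr_obj hH₁ a) ≫ J.map (F.map f) ≫
              eqToHom (Functor.congr_obj hH₁ b).symm) ≫
            eqToHom (Functor.congr_obj hH₁ b) := by simp
        _ = 0 := by rw [← h1]; simp
    exact hf (hFne f (hJinj (F.map f) this))
  have hH₂ne : ∀ {a b : C} (f : a ⟶ b), f ≠ 0 → H₂.map f ≠ 0 := by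
    intro a b f hf h0
    have h1 := Functor.congr_hom hH₂ f
    simp only [Functor.comp_map] at h1
    rw [h0, hG0] at h1
    have : J.map (F.map f) = 0 := by
      calc J.map (F.map f)
          = eqToHom (Functor.congr_obj hH₂ a).symm ≫
            (eqToHom (Functor.congr_obj hH₂ a) ≫ J.map (F.map f) ≫
              eqToHom (Functor.congr_obj hH₂ b).symm) ≫
            eqToHom (Functor.congr_obj hH₂ b) := by simp
      _ = 0 := by rw [← h1]; simp
    exact hf (hFne f (hJinj (F.map f) this))
  -- forward propagation
  have fwd : ∀ {a b : C} (f : a ⟶ b) (ha : H₁.obj a = H₂.obj a), f ≠ 0 →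
      ∃ h : H₁.obj b = H₂.obj b,
        eqToHom ha ≫ H₂.map f = H₁.map f ≫ eqToHom h := by
    intro a b f ha hf
    have heq : G.map (H₁.map f) ≫ eqToHom (hO₁ b) =
        G.map (eqToHom ha ≫ H₂.map f) ≫ eqToHom (hO₂ b) := by
      have h1 := Functor.congr_hom hH₁ f
      have h2 := Functor.congr_hom hH₂ f
      simp only [Functor.comp_map] at h1 h2
      rw [G.map_comp, h1, h2, eqToHom_map]
      simp [eqToHom_trans]
    obtain ⟨h, hh⟩ := key_out (H₁.obj a) (F.obj b) (H₁.obj b) (H₂.obj b)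
      (hO₁ b) (hO₂ b) (H₁.map f) (eqToHom ha ≫ H₂.map f) heq (hH₁ne f hf)
    exact ⟨h, hh⟩
  -- backward propagation
  have bwd : ∀ {a b : C} (f : a ⟶ b), H₁.obj b = H₂.obj b → f ≠ 0 →
      H₁.obj a = H₂.obj a := by
    intro a b f hb hf
    have heq : eqToHom (hO₁ a).symm ≫ G.map (H₁.map f) =
        eqToHom (hO₂ a).symm ≫ G.map (H₂.map f ≫ eqToHom hb.symm) := by
      have h1 := Functor.congr_hom hH₁ f
      have h2 := Functor.congr_hom hH₂ f
      simp only [Functor.comp_map] at h1 h2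
      rw [G.map_comp, h1, h2, eqToHom_map]
      simp [eqToHom_trans]
    obtain ⟨h, _⟩ := key_in (H₁.obj b) (F.obj a) (H₁.obj a) (H₂.obj a)
      (hO₁ a) (hO₂ a) (H₁.map f) (H₂.map f ≫ eqToHom hb.symm) heq (hH₁ne f hf)
    exact h
  -- object equality everywhere, by connectedness
  have hobj : ∀ y : C, H₁.obj y = H₂.obj y := by
    have step : ∀ a b : C, Relation.EqvGen (fun u v : C => ∃ f : u ⟶ v, f ≠ 0) a b →
        (H₁.obj a = H₂.obj a ↔ H₁.obj b = H₂.obj b) := by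
      intro a b hab
      induction hab with
      | rel u v huv =>
        obtain ⟨f, hf⟩ := huv
        exact ⟨fun h => (fwd f h hf).choose, fun h => bwd f h hf⟩
      | refl u => exact Iff.rfl
      | symm u v _ ih => exact ih.symm
      | trans u v w _ _ ih₁ ih₂ => exact ih₁.trans ih₂
    intro y
    exact (step x y (hC x y)).mp hx
  -- now the maps agree
  refine CategoryTheory.Functor.ext hobj ?_
  intro a b f
  by_cases hf : f = 0
  · subst hf
    have h10 : H₁.map (0 : a ⟶ b) = 0 := by
      have := hH₁lin.2 a b 0 0; simpa using this
    have h20 : H₂.map (0 : a ⟶ b) = 0 := by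
      have := hH₂lin.2 a b 0 0; simpa using this
    rw [h10, h20]
    simp
  · obtain ⟨h, hh⟩ := fwd f (hobj a) hf
    calc H₁.map f = (H₁.map f ≫ eqToHom h) ≫ eqToHom h.symm := by simp
      _ = (eqToHom (hobj a) ≫ H₂.map f) ≫ eqToHom h.symm := by rw [← hh]
      _ = eqToHom (hobj a) ≫ H₂.map f ≫ eqToHom (hobj b).symm := by simp
end

section
/- Let F : C → B be a covering of k-categories with C connected. If H is an invertible k-linear endofunctor of C with F ∘ H = F and H fixes some object of C (H(x) = x), then H is the identity functor. Consequently the group Aut₁F acts freely on each fibre F⁻¹(b). -/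
open CategoryTheory

universe w v u

section AuxStar

variable {k : Type w} [CommRing k]
variable {C : Type u} [Category.{v} C] [Preadditive C] [CategoryTheory.Linear k C]
variable {B : Type u} [Category.{v} B] [Preadditive B] [CategoryTheory.Linear k B]

lemma starOutHom_of (F : C ⥤ B) (hF : IsLinearFunctor k F) (x : C) (c : B)
    [DecidableEq {y : C // F.obj y = c}]
    (y : {y : C // F.obj y = c}) (f : x ⟶ y.1) :
    starOutHom k F hF x c (DirectSum.of (fun y : {y : C // F.obj y = c} => (x ⟶ y.1)) y f)
      = F.map f ≫ eqToHom y.2 := by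
  rw [starOutHom]; erw [DirectSum.toAddMonoid_of]; rfl

lemma starInHom_of (F : C ⥤ B) (hF : IsLinearFunctor k F) (x : C) (c : B)
    [DecidableEq {y : C // F.obj y = c}]
    (y : {y : C // F.obj y = c}) (f : y.1 ⟶ x) :
    starInHom k F hF x c (DirectSum.of (fun y : {y : C // F.obj y = c} => (y.1 ⟶ x)) y f)
      = eqToHom y.2.symm ≫ F.map f := by
  rw [starInHom]; erw [DirectSum.toAddMonoid_of]; rfl

end AuxStar

theorem aut_acts_freely (k : Type w) [CommRing k]
    {C : Type u} [Category.{v} C] [Preadditive C] [CategoryTheory.Linear k C]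
    {B : Type u} [Category.{v} B] [Preadditive B] [CategoryTheory.Linear k B]
    (F : C ⥤ B) (hF : IsCovering k F) (hC : IsConnectedKCat C)
    (H : C ⥤ C) (hH : MemAut1 k F H) (x : C) (hx : H.obj x = x) :
    H = 𝟭 C := by
  classical
  obtain ⟨hlin, hsurj, hout, hin⟩ := hF
  obtain ⟨hHlin, hinvex, hcomp⟩ := hH
  have hobjF : ∀ y : C, F.obj (H.obj y) = F.obj y := fun y => Functor.congr_obj hcomp y
  have hmapF : ∀ {a b : C} (f : a ⟶ b),
      F.map (H.map f) = eqToHom (hobjF a) ≫ F.map f ≫ eqToHom (hobjF b).symm := by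
    intro a b f
    simpa using Functor.congr_hom hcomp f
  have fwd : ∀ a b : C, (∃ f : a ⟶ b, f ≠ 0) → H.obj a = a → H.obj b = b := by
    rintro a b ⟨f, hf⟩ ha
    set c := F.obj b with hc
    let i : {y : C // F.obj y = c} := ⟨b, rfl⟩
    let j : {y : C // F.obj y = c} := ⟨H.obj b, hobjF b⟩
    let g : a ⟶ H.obj b := eqToHom ha.symm ≫ H.map f
    have him : starOutHom k F hlin a c
          (DirectSum.of (fun y : {y : C // F.obj y = c} => (a ⟶ y.1)) i f)
        = starOutHom k F hlin a c
          (DirectSum.of (fun y : {y : C // F.obj y = c} => (a ⟶ y.1)) j g) := by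
      rw [starOutHom_of, starOutHom_of]
      show F.map f ≫ eqToHom i.2 = F.map g ≫ eqToHom j.2
      simp [g, hlin.1, hmapF f, eqToHom_map]
    have heq := (hout a c).1 him
    have hij : i = j := by
      by_contra hne
      apply hf
      have h2 := congrFun (congrArg DFunLike.coe heq) i
      erw [DirectSum.of_eq_same, DirectSum.of_eq_of_ne _ _ _ hne] at h2
      exact h2
    exact (congrArg Subtype.val hij).symm
  have bwd : ∀ a b : C, (∃ f : a ⟶ b, f ≠ 0) → H.obj b = b → H.obj a = a := by
    rintro a b ⟨f, hf⟩ hb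
    set c := F.obj a with hc
    let i : {y : C // F.obj y = c} := ⟨a, rfl⟩
    let j : {y : C // F.obj y = c} := ⟨H.obj a, hobjF a⟩
    let g : H.obj a ⟶ b := H.map f ≫ eqToHom hb
    have him : starInHom k F hlin b c
          (DirectSum.of (fun y : {y : C // F.obj y = c} => (y.1 ⟶ b)) i f)
        = starInHom k F hlin b c
          (DirectSum.of (fun y : {y : C // F.obj y = c} => (y.1 ⟶ b)) j g) := by
      rw [starInHom_of, starInHom_of]
      show eqToHom i.2.symm ≫ F.map f = eqToHom j.2.symm ≫ F.map g
      simp [g, hlin.1, hmapF f, eqToHom_map]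
    have heq := (hin b c).1 him
    have hij : i = j := by
      by_contra hne
      apply hf
      have h2 := congrFun (congrArg DFunLike.coe heq) i
      erw [DirectSum.of_eq_same, DirectSum.of_eq_of_ne _ _ _ hne] at h2
      exact h2
    exact (congrArg Subtype.val hij).symm
  have hobj : ∀ y : C, H.obj y = y := by
    intro y
    have key : ∀ a b : C, Relation.EqvGen (fun a b : C => ∃ f : a ⟶ b, f ≠ 0) a b →
        (H.obj a = a ↔ H.obj b = b) := by
      intro a b h
      induction h with
      | rel a b hr => exact ⟨fwd a b hr, bwd a b hr⟩
      | refl => exact Iff.rfl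
      | symm _ _ _ ih => exact ih.symm
      | trans _ _ _ _ _ ih1 ih2 => exact ih1.trans ih2
    exact (key x y (hC x y)).1 hx
  have hmap : ∀ (a b : C) (f : a ⟶ b),
      H.map f = eqToHom (hobj a) ≫ f ≫ eqToHom (hobj b).symm := by
    intro a b f
    set c := F.obj b with hc
    let i : {y : C // F.obj y = c} := ⟨b, rfl⟩
    let f' : a ⟶ b := eqToHom (hobj a).symm ≫ H.map f ≫ eqToHom (hobj b)
    have him : starOutHom k F hlin a c
          (DirectSum.of (fun y : {y : C // F.obj y = c} => (a ⟶ y.1)) i f')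
        = starOutHom k F hlin a c
          (DirectSum.of (fun y : {y : C // F.obj y = c} => (a ⟶ y.1)) i f) := by
      rw [starOutHom_of, starOutHom_of]
      show F.map f' ≫ eqToHom i.2 = F.map f ≫ eqToHom i.2
      simp [f', hlin.1, hmapF f, eqToHom_map]
    have heq := (hout a c).1 him
    have hff : f' = f := by
      have h1 := congrFun (congrArg DFunLike.coe heq) i
      erw [DirectSum.of_eq_same, DirectSum.of_eq_same] at h1
      exact h1
    have hfinal : eqToHom (hobj a) ≫ f' ≫ eqToHom (hobj b).symm = H.map f := by
      simp [f']
    rw [← hfinal, hff]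
  exact CategoryTheory.Functor.ext hobj (fun a b f => by simpa using hmap a b f)
end

section
/- Let F : C → B be a Galois covering of k-categories. Then Aut₁F acts transitively on every fibre: for every object b of B and all objects x, y of C with F(x) = b = F(y), there exists H ∈ Aut₁F with H(x) = y. -/
open CategoryTheory

universe w v u

section Helpers
set_option linter.unusedSectionVars false

variable {k : Type w} [CommRing k]
variable {C : Type u} [Category.{v} C] [Preadditive C] [CategoryTheory.Linear k C]
variable {B : Type u} [Category.{v} B] [Preadditive B] [CategoryTheory.Linear k B]

lemma starOut_of (F : C ⥤ B) (hF : IsLinearFunctor k F) (x : C) (c : B)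
    [DecidableEq {y : C // F.obj y = c}]
    (y : {y : C // F.obj y = c}) (f : x ⟶ y.1) :
    starOutHom k F hF x c (DirectSum.of _ y f) = F.map f ≫ eqToHom y.2 := by
  simp only [starOutHom]
  exact DirectSum.toAddMonoid_of
    (fun (y : {y : C // F.obj y = c}) => AddMonoidHom.mk' (fun f : x ⟶ y.1 => F.map f ≫ eqToHom y.2)
      (fun f g => by (try simp only []); rw [hF.1 _ _ f g, Preadditive.add_comp])) y f

lemma starIn_of (F : C ⥤ B) (hF : IsLinearFunctor k F) (x : C) (c : B)
    [DecidableEq {y : C // F.obj y = c}]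
    (y : {y : C // F.obj y = c}) (f : y.1 ⟶ x) :
    starInHom k F hF x c (DirectSum.of _ y f) = eqToHom y.2.symm ≫ F.map f := by
  simp only [starInHom]
  exact DirectSum.toAddMonoid_of
    (fun (y : {y : C // F.obj y = c}) => AddMonoidHom.mk' (fun f : y.1 ⟶ x => eqToHom y.2.symm ≫ F.map f)
      (fun f g => by (try simp only []); rw [hF.1 _ _ f g, Preadditive.comp_add])) y f

/-- A covering functor reflects nonzero morphisms. -/
lemma F_map_ne_zero (F : C ⥤ B) (hF : IsLinearFunctor k F)
    (hout : ∀ (x : C) (c : B), Function.Bijective (starOutHom k F hF x c))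
    {x w : C} (f : x ⟶ w) (hf : f ≠ 0) : F.map f ≠ 0 := by
  classical
  intro h0
  have h1 : starOutHom k F hF x (F.obj w) (DirectSum.of _ ⟨w, rfl⟩ f) = 0 := by
    rw [starOut_of]; simp [h0]
  have h2 : (DirectSum.of (fun (y : {y : C // F.obj y = F.obj w}) => (x ⟶ y.1)) ⟨w, rfl⟩ f) = 0 :=
    (hout x (F.obj w)).1 (by rw [h1, map_zero])
  have h3 := congrArg (fun α => α (⟨w, rfl⟩ : {y : C // F.obj y = F.obj w})) h2
  simp only [DirectSum.of_eq_same] at h3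
  exact hf h3

variable (k) in
/-- The orbit relation for `Aut₁ F`. -/
def Orb (F : C ⥤ B) (x y : C) : Prop :=
  ∃ H : C ⥤ C, MemAut1 k F H ∧ H.obj x = y

lemma memAut1_id (F : C ⥤ B) : MemAut1 k F (𝟭 C) :=
  ⟨⟨fun _ _ _ _ => rfl, fun _ _ _ _ => rfl⟩, ⟨𝟭 C, rfl, rfl⟩, rfl⟩

lemma memAut1_comp {F : C ⥤ B} {H H' : C ⥤ C} (hH : MemAut1 k F H) (hH' : MemAut1 k F H') :
    MemAut1 k F (H ⋙ H') := by
  obtain ⟨⟨ha, hs⟩, ⟨Hi, hi1, hi2⟩, hc⟩ := hH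
  obtain ⟨⟨ha', hs'⟩, ⟨Hi', hi1', hi2'⟩, hc'⟩ := hH'
  refine ⟨⟨fun x y f g => ?_, fun x y r f => ?_⟩, ⟨Hi' ⋙ Hi, ?_, ?_⟩, ?_⟩
  · show H'.map (H.map (f + g)) = _
    rw [ha _ _ f g, ha' _ _ (H.map f) (H.map g)]; rfl
  · show H'.map (H.map (r • f)) = _
    rw [hs _ _ r f, hs' _ _ r (H.map f)]; rfl
  · show H ⋙ (H' ⋙ Hi') ⋙ Hi = 𝟭 C
    rw [hi1', Functor.id_comp, hi1]
  · show Hi' ⋙ (Hi ⋙ H) ⋙ H' = 𝟭 C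
    rw [hi2, Functor.id_comp, hi2']
  · show H ⋙ (H' ⋙ F) = F
    rw [hc', hc]

lemma memAut1_obj {F : C ⥤ B} {H : C ⥤ C} (hH : MemAut1 k F H) (x : C) :
    F.obj (H.obj x) = F.obj x :=
  Functor.congr_obj hH.2.2 x

lemma memAut1_map {F : C ⥤ B} {H : C ⥤ C} (hH : MemAut1 k F H) {x y : C} (f : x ⟶ y) :
    F.map (H.map f) = eqToHom (memAut1_obj hH x) ≫ F.map f ≫ eqToHom (memAut1_obj hH y).symm :=
  Functor.congr_hom hH.2.2 f

lemma memAut1_inv {F : C ⥤ B} {H Hinv : C ⥤ C} (hH : MemAut1 k F H)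
    (h1 : H ⋙ Hinv = 𝟭 C) (h2 : Hinv ⋙ H = 𝟭 C) : MemAut1 k F Hinv := by
  obtain ⟨⟨ha, hs⟩, _, hc⟩ := hH
  have hfaith : ∀ {a b : C} (u v : a ⟶ b), H.map u = H.map v → u = v := by
    intro a b u v huv
    have e1 := Functor.congr_hom h1 u
    have e2 := Functor.congr_hom h1 v
    simp only [Functor.comp_map, Functor.id_map] at e1 e2
    have : Hinv.map (H.map u) = Hinv.map (H.map v) := by rw [huv]
    rw [e1, e2, ← Category.assoc, ← Category.assoc] at this
    rwa [cancel_mono, cancel_epi] at this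
  refine ⟨⟨fun x y f g => ?_, fun x y r f => ?_⟩, ⟨H, h2, h1⟩, ?_⟩
  · apply hfaith
    have e := Functor.congr_hom h2 (f + g)
    have ef := Functor.congr_hom h2 f
    have eg := Functor.congr_hom h2 g
    simp only [Functor.comp_map, Functor.id_map] at e ef eg
    rw [ha _ _ (Hinv.map f) (Hinv.map g), e, ef, eg, Preadditive.add_comp, Preadditive.comp_add]
  · apply hfaith
    have e := Functor.congr_hom h2 (r • f)
    have ef := Functor.congr_hom h2 f
    simp only [Functor.comp_map, Functor.id_map] at e ef
    rw [hs _ _ r (Hinv.map f), e, ef, CategoryTheory.Linear.smul_comp,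
      CategoryTheory.Linear.comp_smul]
  · have : Hinv ⋙ (H ⋙ F) = Hinv ⋙ F := by rw [hc]
    rw [← this]
    show (Hinv ⋙ H) ⋙ F = F
    rw [h2, Functor.id_comp]

lemma orb_refl (F : C ⥤ B) (x : C) : Orb k F x x := ⟨𝟭 C, memAut1_id F, rfl⟩

lemma orb_symm {F : C ⥤ B} {x y : C} (h : Orb k F x y) : Orb k F y x := by
  obtain ⟨H, hH, hxy⟩ := h
  obtain ⟨Hinv, h1, h2⟩ := hH.2.1
  refine ⟨Hinv, memAut1_inv hH h1 h2, ?_⟩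
  rw [← hxy]
  exact Functor.congr_obj h1 x

lemma orb_trans {F : C ⥤ B} {x y z : C} (h : Orb k F x y) (h' : Orb k F y z) : Orb k F x z := by
  obtain ⟨H, hH, hxy⟩ := h
  obtain ⟨H', hH', hyz⟩ := h'
  exact ⟨H ⋙ H', memAut1_comp hH hH', by show H'.obj (H.obj x) = z; rw [hxy, hyz]⟩

lemma step_out (F : C ⥤ B) (hLin : IsLinearFunctor k F)
    (hout : ∀ (x : C) (c : B), Function.Bijective (starOutHom k F hLin x c))
    (hin : ∀ (x : C) (c : B), Function.Bijective (starInHom k F hLin x c))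
    {z w : C} (f : z ⟶ w) (hf : f ≠ 0)
    (hP : ∀ z', F.obj z' = F.obj z → Orb k F z' z) :
    ∀ w₁ w₂ : C, F.obj w₁ = F.obj w → F.obj w₂ = F.obj w → Orb k F w₁ w₂ := by
  classical
  intro w₁ w₂ hw₁ hw₂
  by_contra hcon
  have key : ∀ (w' : C) (hw' : F.obj w' = F.obj w),
      ∃ α : DirectSum {y : C // F.obj y = F.obj w} (fun y => (z ⟶ y.1)),
        (∀ y, α y ≠ 0 → Orb k F y.1 w') ∧
        starOutHom k F hLin z (F.obj w) α = F.map f := by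
    intro w' hw'
    obtain ⟨γ, hγ⟩ := (hin w' (F.obj z)).2 (F.map f ≫ eqToHom hw'.symm)
    have main : ∀ γ' : DirectSum {y : C // F.obj y = F.obj z} (fun y => (y.1 ⟶ w')),
        ∃ α : DirectSum {y : C // F.obj y = F.obj w} (fun y => (z ⟶ y.1)),
          (∀ y, α y ≠ 0 → Orb k F y.1 w') ∧
          starOutHom k F hLin z (F.obj w) α
            = starInHom k F hLin w' (F.obj z) γ' ≫ eqToHom hw' := by
      intro γ'
      induction γ' using DirectSum.induction_on with
      | zero => exact ⟨0, fun y hy => by simp at hy, by simp⟩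
      | of y₀ g =>
        obtain ⟨K, hK, hKo⟩ := hP y₀.1 y₀.2
        have h2 : F.obj (K.obj w') = F.obj w := (memAut1_obj hK w').trans hw'
        refine ⟨DirectSum.of _ ⟨K.obj w', h2⟩ (eqToHom hKo.symm ≫ K.map g), ?_, ?_⟩
        · intro y hy
          by_cases hyy : (⟨K.obj w', h2⟩ : {y : C // F.obj y = F.obj w}) = y
          · rw [← hyy]
            obtain ⟨Kinv, k1, k2⟩ := hK.2.1
            exact ⟨Kinv, memAut1_inv hK k1 k2, Functor.congr_obj k1 w'⟩
          · rw [DirectSum.of_eq_of_ne _ _ _ (Ne.symm hyy)] at hy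
            exact absurd rfl hy
        · rw [starOut_of, starIn_of, F.map_comp, memAut1_map hK g]
          simp [eqToHom_map]
      | add a b ha hb =>
        obtain ⟨α₁, h11, h12⟩ := ha
        obtain ⟨α₂, h21, h22⟩ := hb
        refine ⟨α₁ + α₂, ?_, ?_⟩
        · intro y hy
          rw [DirectSum.add_apply] at hy
          by_cases h1 : α₁ y = 0
          · exact h21 y (by rwa [h1, zero_add] at hy)
          · exact h11 y h1
        · rw [map_add, h12, h22, map_add, Preadditive.add_comp]
    obtain ⟨α, h1, h2⟩ := main γ
    refine ⟨α, h1, ?_⟩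
    rw [h2, hγ]
    simp
  obtain ⟨α₁, hs₁, he₁⟩ := key w₁ hw₁
  obtain ⟨α₂, hs₂, he₂⟩ := key w₂ hw₂
  have hα : α₁ = α₂ := (hout z (F.obj w)).1 (he₁.trans he₂.symm)
  have hzero : α₁ = 0 := by
    apply DFinsupp.ext
    intro y
    by_contra hy
    exact hcon (orb_trans (orb_symm (hs₁ y hy)) (hs₂ y (by rw [← hα]; exact hy)))
  rw [hzero, map_zero] at he₁
  exact F_map_ne_zero F hLin hout f hf he₁.symm

lemma step_in (F : C ⥤ B) (hLin : IsLinearFunctor k F)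
    (hout : ∀ (x : C) (c : B), Function.Bijective (starOutHom k F hLin x c))
    (hin : ∀ (x : C) (c : B), Function.Bijective (starInHom k F hLin x c))
    {z w : C} (f : w ⟶ z) (hf : f ≠ 0)
    (hP : ∀ z', F.obj z' = F.obj z → Orb k F z' z) :
    ∀ w₁ w₂ : C, F.obj w₁ = F.obj w → F.obj w₂ = F.obj w → Orb k F w₁ w₂ := by
  classical
  intro w₁ w₂ hw₁ hw₂
  by_contra hcon
  have key : ∀ (w' : C) (hw' : F.obj w' = F.obj w),
      ∃ α : DirectSum {y : C // F.obj y = F.obj w} (fun y => (y.1 ⟶ z)),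
        (∀ y, α y ≠ 0 → Orb k F y.1 w') ∧
        starInHom k F hLin z (F.obj w) α = F.map f := by
    intro w' hw'
    obtain ⟨γ, hγ⟩ := (hout w' (F.obj z)).2 (eqToHom hw' ≫ F.map f)
    have main : ∀ γ' : DirectSum {y : C // F.obj y = F.obj z} (fun y => (w' ⟶ y.1)),
        ∃ α : DirectSum {y : C // F.obj y = F.obj w} (fun y => (y.1 ⟶ z)),
          (∀ y, α y ≠ 0 → Orb k F y.1 w') ∧
          starInHom k F hLin z (F.obj w) α
            = eqToHom hw'.symm ≫ starOutHom k F hLin w' (F.obj z) γ' := by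
      intro γ'
      induction γ' using DirectSum.induction_on with
      | zero => exact ⟨0, fun y hy => by simp at hy, by simp⟩
      | of y₀ g =>
        obtain ⟨K, hK, hKo⟩ := hP y₀.1 y₀.2
        have h2 : F.obj (K.obj w') = F.obj w := (memAut1_obj hK w').trans hw'
        refine ⟨DirectSum.of _ ⟨K.obj w', h2⟩ (K.map g ≫ eqToHom hKo), ?_, ?_⟩
        · intro y hy
          by_cases hyy : (⟨K.obj w', h2⟩ : {y : C // F.obj y = F.obj w}) = y
          · rw [← hyy]
            obtain ⟨Kinv, k1, k2⟩ := hK.2.1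
            exact ⟨Kinv, memAut1_inv hK k1 k2, Functor.congr_obj k1 w'⟩
          · rw [DirectSum.of_eq_of_ne _ _ _ (Ne.symm hyy)] at hy
            exact absurd rfl hy
        · rw [starIn_of, starOut_of, F.map_comp, memAut1_map hK g]
          simp [eqToHom_map]
      | add a b ha hb =>
        obtain ⟨α₁, h11, h12⟩ := ha
        obtain ⟨α₂, h21, h22⟩ := hb
        refine ⟨α₁ + α₂, ?_, ?_⟩
        · intro y hy
          rw [DirectSum.add_apply] at hy
          by_cases h1 : α₁ y = 0
          · exact h21 y (by rwa [h1, zero_add] at hy)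
          · exact h11 y h1
        · rw [map_add, h12, h22, map_add, Preadditive.comp_add]
    obtain ⟨α, h1, h2⟩ := main γ
    refine ⟨α, h1, ?_⟩
    rw [h2, hγ]
    simp
  obtain ⟨α₁, hs₁, he₁⟩ := key w₁ hw₁
  obtain ⟨α₂, hs₂, he₂⟩ := key w₂ hw₂
  have hα : α₁ = α₂ := (hin z (F.obj w)).1 (he₁.trans he₂.symm)
  have hzero : α₁ = 0 := by
    apply DFinsupp.ext
    intro y
    by_contra hy
    exact hcon (orb_trans (orb_symm (hs₁ y hy)) (hs₂ y (by rw [← hα]; exact hy)))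
  rw [hzero, map_zero] at he₁
  exact F_map_ne_zero F hLin hout f hf he₁.symm

end Helpers


theorem galois_aut_transitive_on_every_fibre (k : Type w) [CommRing k]
    {C : Type u} [Category.{v} C] [Preadditive C] [CategoryTheory.Linear k C]
    {B : Type u} [Category.{v} B] [Preadditive B] [CategoryTheory.Linear k B]
    (F : C ⥤ B) (hF : IsGaloisCovering k F) :
    ∀ (b : B) (x y : C), F.obj x = b → F.obj y = b →
      ∃ H : C ⥤ C, MemAut1 k F H ∧ H.obj x = y := by
  classical
  obtain ⟨⟨hLin, hsurj, hout, hin⟩, hconn, b₀, htrans⟩ := hF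
  intro b x y hx hy
  have main : ∀ z z' : C, Relation.EqvGen (fun a b : C => ∃ f : a ⟶ b, f ≠ 0) z z' →
      ((∀ u v : C, F.obj u = F.obj z → F.obj v = F.obj z → Orb k F u v) ↔
       (∀ u v : C, F.obj u = F.obj z' → F.obj v = F.obj z' → Orb k F u v)) := by
    intro z z' h
    induction h with
    | rel a b' hab =>
      obtain ⟨g, hg⟩ := hab
      constructor
      · intro hP
        exact step_out F hLin hout hin g hg (fun u hu => hP u a hu rfl)
      · intro hP
        exact step_in F hLin hout hin g hg (fun u hu => hP u b' hu rfl)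
    | refl a => exact Iff.rfl
    | symm a b' _ ih => exact ih.symm
    | trans a b' c _ _ ih1 ih2 => exact ih1.trans ih2
  obtain ⟨z₀, hz₀⟩ := hsurj b₀
  have hP₀ : ∀ u v : C, F.obj u = F.obj z₀ → F.obj v = F.obj z₀ → Orb k F u v := by
    intro u v hu hv
    exact htrans u v (hu.trans hz₀) (hv.trans hz₀)
  have hPx := (main z₀ x (hconn z₀ x)).mp hP₀
  exact hPx x y rfl (hy.trans hx.symm)
end

section
/- Let k be a field and let B be a k-category such that the endomorphism ring of each object is reduced to k (every endomorphism of any object b is a scalar multiple of the identity id_b). Let F : C → B be a Galois covering with chosen fibre objects x_b ∈ F⁻¹(b) and induced Aut₁F-grading Z, and let χ : Aut₁F → k be an additive character (χ(st) = χ(s) + χ(t)). If there exists a family of endomorphisms α_b ∈ B(b,b) such that χ(s) • f = α_c ∘ f − f ∘ α_b for every s ∈ Aut₁F, all objects b, c of B, and every homogeneous f ∈ Z_s(c,b) (i.e., the Euler derivation Δχ is inner), then χ = 0. Consequently the canonical map Δ from additive characters of Aut₁F to the first Hochschild–Mitchell cohomology (derivations modulo inner derivations) is injective. -/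
open CategoryTheory

universe w v u

section EulerAux

variable {k : Type w} [Field k]
variable {C : Type u} [Category.{v} C] [Preadditive C] [CategoryTheory.Linear k C]
variable {B : Type u} [Category.{v} B] [Preadditive B] [CategoryTheory.Linear k B]
variable {F : C ⥤ B}

namespace EulerAux

lemma lin_map_zero {D : Type u} [Category.{v} D] [Preadditive D] [CategoryTheory.Linear k D]
    {H : C ⥤ D} (hH : IsLinearFunctor k H) {X Y : C} : H.map (0 : X ⟶ Y) = 0 := by
  simpa using hH.2 X Y 0 0

lemma starOutHom_of [DecidableEq C] (hFl : IsLinearFunctor k F) (x : C) (c : B)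
    (y : {y : C // F.obj y = c}) (f : x ⟶ y.1) :
    starOutHom k F hFl x c (DirectSum.of _ y f) = F.map f ≫ eqToHom y.2 := by
  unfold starOutHom
  exact DirectSum.toAddMonoid_of _ _ _

lemma starInHom_of [DecidableEq C] (hFl : IsLinearFunctor k F) (x : C) (c : B)
    (y : {y : C // F.obj y = c}) (f : y.1 ⟶ x) :
    starInHom k F hFl x c (DirectSum.of _ y f) = eqToHom y.2.symm ≫ F.map f := by
  unfold starInHom
  exact DirectSum.toAddMonoid_of _ _ _

lemma F_map_inj [DecidableEq C] (hFl : IsLinearFunctor k F)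
    (hOut : ∀ (x : C) (c : B), Function.Bijective (starOutHom k F hFl x c))
    {X Y : C} {f g : X ⟶ Y} (h : F.map f = F.map g) : f = g := by
  have h1 : starOutHom k F hFl X (F.obj Y)
        (DirectSum.of _ (⟨Y, rfl⟩ : {y : C // F.obj y = F.obj Y}) f)
      = starOutHom k F hFl X (F.obj Y) (DirectSum.of _ ⟨Y, rfl⟩ g) := by
    rw [starOutHom_of, starOutHom_of, h]
  have h2 := (hOut X (F.obj Y)).1 h1
  have h3 := congrArg (fun ξ => ξ (⟨Y, rfl⟩ : {y : C // F.obj y = F.obj Y})) h2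
  simpa [DirectSum.of_eq_same] using h3

lemma mem_id : MemAut1 k F (𝟭 C) :=
  ⟨⟨fun _ _ _ _ => rfl, fun _ _ _ _ => rfl⟩,
   ⟨𝟭 C, Functor.id_comp _, Functor.id_comp _⟩, Functor.id_comp F⟩

lemma mem_comp {s t : C ⥤ C} (hs : MemAut1 k F s) (ht : MemAut1 k F t) :
    MemAut1 k F (s ⋙ t) := by
  obtain ⟨slin, ⟨si, hs1, hs2⟩, hsF⟩ := hs
  obtain ⟨tlin, ⟨ti, ht1, ht2⟩, htF⟩ := ht
  refine ⟨⟨fun X Y f g => ?_, fun X Y r f => ?_⟩, ⟨ti ⋙ si, ?_, ?_⟩, ?_⟩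
  · show t.map (s.map (f + g)) = _
    rw [slin.1, tlin.1]; rfl
  · show t.map (s.map (r • f)) = _
    rw [slin.2, tlin.2]; rfl
  · rw [Functor.assoc, ← Functor.assoc t ti si, ht1, Functor.id_comp, hs1]
  · rw [Functor.assoc, ← Functor.assoc si s t, hs2, Functor.id_comp, ht2]
  · rw [Functor.assoc, htF, hsF]

lemma mem_inv {t : C ⥤ C} (ht : MemAut1 k F t) :
    ∃ ti : C ⥤ C, MemAut1 k F ti ∧ t ⋙ ti = 𝟭 C ∧ ti ⋙ t = 𝟭 C := by
  obtain ⟨hlin, ⟨ti, h1, h2⟩, hFeq⟩ := ht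
  have tinj : ∀ {X Y : C} (u v' : X ⟶ Y), t.map u = t.map v' → u = v' := by
    intro X Y u v' huv
    have hu := Functor.congr_hom h1 u
    have hv := Functor.congr_hom h1 v'
    simp only [Functor.comp_map, Functor.id_map] at hu hv
    rw [huv] at hu
    have h3 := hu.symm.trans hv
    rw [cancel_epi, cancel_mono] at h3
    exact h3
  have tilin : IsLinearFunctor k ti := by
    constructor
    · intro X Y f g
      apply tinj
      have hfg := Functor.congr_hom h2 (f + g)
      have hf := Functor.congr_hom h2 f
      have hg := Functor.congr_hom h2 g
      simp only [Functor.comp_map, Functor.id_map] at hfg hf hg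
      rw [hlin.1, hfg, hf, hg, Preadditive.add_comp, Preadditive.comp_add]
    · intro X Y r f
      apply tinj
      have hrf := Functor.congr_hom h2 (r • f)
      have hf := Functor.congr_hom h2 f
      simp only [Functor.comp_map, Functor.id_map] at hrf hf
      rw [hlin.2, hrf, hf, Linear.smul_comp, Linear.comp_smul]
  have tiF : ti ⋙ F = F := by
    have h3 : ti ⋙ (t ⋙ F) = F := by rw [← Functor.assoc, h2, Functor.id_comp]
    rwa [hFeq] at h3
  exact ⟨ti, ⟨tilin, ⟨t, h2, h1⟩, tiF⟩, h1, h2⟩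

lemma cancel_of_comp_id {t ti : C ⥤ C} (h2 : ti ⋙ t = 𝟭 C) (hlin : IsLinearFunctor k t)
    {a b : C} (g : a ⟶ b) (h0 : ti.map g = 0) : g = 0 := by
  have h4 := Functor.congr_hom h2 g
  simp only [Functor.comp_map, Functor.id_map] at h4
  rw [h0, lin_map_zero hlin] at h4
  have h5 := congrArg
    (fun p => eqToHom (Functor.congr_obj h2 a).symm ≫ p ≫ eqToHom (Functor.congr_obj h2 b)) h4
  simpa using h5.symm

lemma stepA [DecidableEq C] (hFl : IsLinearFunctor k F)
    (hOut : ∀ (x : C) (c : B), Function.Bijective (starOutHom k F hFl x c))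
    (hIn : ∀ (x : C) (c : B), Function.Bijective (starInHom k F hFl x c))
    {b c : B} (h : b ⟶ c) (hne : h ≠ 0)
    (htr : ∀ v₁ v₂ : C, F.obj v₁ = b → F.obj v₂ = b →
      ∃ t, MemAut1 k F t ∧ t.obj v₁ = v₂)
    (z₁ z₂ : C) (hz₁ : F.obj z₁ = c) (hz₂ : F.obj z₂ = c) :
    ∃ u, MemAut1 k F u ∧ u.obj z₂ = z₁ := by
  obtain ⟨ξ₀, hξ₀⟩ := (hIn z₁ b).2 (h ≫ eqToHom hz₁.symm)
  have hξ₀ne : ξ₀ ≠ 0 := by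
    rintro rfl
    rw [map_zero] at hξ₀
    apply hne
    calc h = (h ≫ eqToHom hz₁.symm) ≫ eqToHom hz₁ := by simp
    _ = 0 := by rw [← hξ₀]; simp
  obtain ⟨v₁, hv₁⟩ : ∃ v, ξ₀ v ≠ 0 := by
    by_contra hc; push_neg at hc
    exact hξ₀ne (DFinsupp.ext fun i => by simpa using hc i)
  have claim : ∀ η : DirectSum {y : C // F.obj y = F.obj v₁.1} (fun y => (y.1 ⟶ z₂)),
      ∃ ξ : DirectSum {w : C // F.obj w = c} (fun w => (v₁.1 ⟶ w.1)),
        (∀ w, ξ w ≠ 0 → ∃ u, MemAut1 k F u ∧ u.obj z₂ = w.1) ∧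
        starOutHom k F hFl v₁.1 c ξ
          = starInHom k F hFl z₂ (F.obj v₁.1) η ≫ eqToHom hz₂ := by
    intro η
    induction η using DirectSum.induction_on with
    | zero =>
        refine ⟨0, fun w hw => absurd (DirectSum.zero_apply w) hw, by simp⟩
    | of v m =>
        obtain ⟨t, htmem, htv⟩ := htr v.1 v₁.1 (v.2.trans v₁.2) v₁.2
        have hw₂ : F.obj (t.obj z₂) = c := (Functor.congr_obj htmem.2.2 z₂).trans hz₂
        refine ⟨DirectSum.of _ ⟨t.obj z₂, hw₂⟩ (eqToHom htv.symm ≫ t.map m), ?_, ?_⟩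
        · intro w hw
          by_cases hwe : w = ⟨t.obj z₂, hw₂⟩
          · subst hwe; exact ⟨t, htmem, rfl⟩
          · exact absurd (DirectSum.of_eq_of_ne _ _ _ hwe) hw
        · rw [starOutHom_of, starInHom_of]
          have hcg := Functor.congr_hom htmem.2.2 m
          simp only [Functor.comp_map] at hcg
          rw [F.map_comp, hcg, eqToHom_map]
          simp [eqToHom_trans]
    | add η₁ η₂ ih₁ ih₂ =>
        obtain ⟨ξ₁, hs₁, he₁⟩ := ih₁
        obtain ⟨ξ₂, hs₂, he₂⟩ := ih₂
        refine ⟨ξ₁ + ξ₂, ?_, ?_⟩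
        · intro w hw
          rw [DirectSum.add_apply] at hw
          by_cases h1 : ξ₁ w = 0
          · exact hs₂ w (by intro h2; rw [h1, h2, add_zero] at hw; exact hw rfl)
          · exact hs₁ w h1
        · rw [map_add, map_add, Preadditive.add_comp, he₁, he₂]
  obtain ⟨η, hη⟩ := (hIn z₂ (F.obj v₁.1)).2
      ((starOutHom k F hFl v₁.1 c (DirectSum.of _ ⟨z₁, hz₁⟩ (ξ₀ v₁))) ≫ eqToHom hz₂.symm)
  obtain ⟨ξ, hsupp, heq⟩ := claim η
  rw [hη] at heq
  have heq2 : starOutHom k F hFl v₁.1 c ξ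
      = starOutHom k F hFl v₁.1 c (DirectSum.of _ ⟨z₁, hz₁⟩ (ξ₀ v₁)) := by
    rw [heq]; simp
  have hxi := (hOut v₁.1 c).1 heq2
  have hcoord : ξ ⟨z₁, hz₁⟩ ≠ 0 := by
    rw [hxi]
    simpa [DirectSum.of_eq_same] using hv₁
  exact hsupp _ hcoord

lemma stepB [DecidableEq C] (hFl : IsLinearFunctor k F)
    (hOut : ∀ (x : C) (c : B), Function.Bijective (starOutHom k F hFl x c))
    (hIn : ∀ (x : C) (c : B), Function.Bijective (starInHom k F hFl x c))
    {b c : B} (h : c ⟶ b) (hne : h ≠ 0)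
    (htr : ∀ v₁ v₂ : C, F.obj v₁ = b → F.obj v₂ = b →
      ∃ t, MemAut1 k F t ∧ t.obj v₁ = v₂)
    (z₁ z₂ : C) (hz₁ : F.obj z₁ = c) (hz₂ : F.obj z₂ = c) :
    ∃ u, MemAut1 k F u ∧ u.obj z₂ = z₁ := by
  obtain ⟨ξ₀, hξ₀⟩ := (hOut z₁ b).2 (eqToHom hz₁ ≫ h)
  have hξ₀ne : ξ₀ ≠ 0 := by
    rintro rfl
    rw [map_zero] at hξ₀
    apply hne
    calc h = eqToHom hz₁.symm ≫ (eqToHom hz₁ ≫ h) := by simp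
    _ = 0 := by rw [← hξ₀]; simp
  obtain ⟨v₁, hv₁⟩ : ∃ v, ξ₀ v ≠ 0 := by
    by_contra hc; push_neg at hc
    exact hξ₀ne (DFinsupp.ext fun i => by simpa using hc i)
  have claim : ∀ η : DirectSum {y : C // F.obj y = F.obj v₁.1} (fun y => (z₂ ⟶ y.1)),
      ∃ ξ : DirectSum {w : C // F.obj w = c} (fun w => (w.1 ⟶ v₁.1)),
        (∀ w, ξ w ≠ 0 → ∃ u, MemAut1 k F u ∧ u.obj z₂ = w.1) ∧
        starInHom k F hFl v₁.1 c ξ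
          = eqToHom hz₂.symm ≫ starOutHom k F hFl z₂ (F.obj v₁.1) η := by
    intro η
    induction η using DirectSum.induction_on with
    | zero =>
        refine ⟨0, fun w hw => absurd (DirectSum.zero_apply w) hw, by simp⟩
    | of v m =>
        obtain ⟨t, htmem, htv⟩ := htr v.1 v₁.1 (v.2.trans v₁.2) v₁.2
        have hw₂ : F.obj (t.obj z₂) = c := (Functor.congr_obj htmem.2.2 z₂).trans hz₂
        refine ⟨DirectSum.of _ ⟨t.obj z₂, hw₂⟩ (t.map m ≫ eqToHom htv), ?_, ?_⟩
        · intro w hw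
          by_cases hwe : w = ⟨t.obj z₂, hw₂⟩
          · subst hwe; exact ⟨t, htmem, rfl⟩
          · exact absurd (DirectSum.of_eq_of_ne _ _ _ hwe) hw
        · rw [starOutHom_of, starInHom_of]
          have hcg := Functor.congr_hom htmem.2.2 m
          simp only [Functor.comp_map] at hcg
          rw [F.map_comp, hcg, eqToHom_map]
          simp [eqToHom_trans]
    | add η₁ η₂ ih₁ ih₂ =>
        obtain ⟨ξ₁, hs₁, he₁⟩ := ih₁
        obtain ⟨ξ₂, hs₂, he₂⟩ := ih₂
        refine ⟨ξ₁ + ξ₂, ?_, ?_⟩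
        · intro w hw
          rw [DirectSum.add_apply] at hw
          by_cases h1 : ξ₁ w = 0
          · exact hs₂ w (by intro h2; rw [h1, h2, add_zero] at hw; exact hw rfl)
          · exact hs₁ w h1
        · rw [map_add, map_add, Preadditive.comp_add, he₁, he₂]
  obtain ⟨η, hη⟩ := (hOut z₂ (F.obj v₁.1)).2
      (eqToHom hz₂ ≫ starInHom k F hFl v₁.1 c (DirectSum.of _ ⟨z₁, hz₁⟩ (ξ₀ v₁)))
  obtain ⟨ξ, hsupp, heq⟩ := claim η
  rw [hη] at heq
  have heq2 : starInHom k F hFl v₁.1 c ξ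
      = starInHom k F hFl v₁.1 c (DirectSum.of _ ⟨z₁, hz₁⟩ (ξ₀ v₁)) := by
    rw [heq]; simp
  have hxi := (hIn v₁.1 c).1 heq2
  have hcoord : ξ ⟨z₁, hz₁⟩ ≠ 0 := by
    rw [hxi]
    simpa [DirectSum.of_eq_same] using hv₁
  exact hsupp _ hcoord

lemma fibre_trans [DecidableEq C] (hFl : IsLinearFunctor k F)
    (hOut : ∀ (x : C) (c : B), Function.Bijective (starOutHom k F hFl x c))
    (hIn : ∀ (x : C) (c : B), Function.Bijective (starInHom k F hFl x c))
    (hconn : IsConnectedKCat C)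
    {b₀ : B} (hgal : ∀ x y : C, F.obj x = b₀ → F.obj y = b₀ →
      ∃ H : C ⥤ C, MemAut1 k F H ∧ H.obj x = y)
    (y₀ : C) (hy₀ : F.obj y₀ = b₀) :
    ∀ z₁ z₂ : C, F.obj z₁ = F.obj z₂ → ∃ u, MemAut1 k F u ∧ u.obj z₁ = z₂ := by
  set Tr : B → Prop := fun b => ∀ v₁ v₂ : C, F.obj v₁ = b → F.obj v₂ = b →
      ∃ t, MemAut1 k F t ∧ t.obj v₁ = v₂ with hTrdef
  have key : ∀ y z : C, Relation.EqvGen (fun a b : C => ∃ f : a ⟶ b, f ≠ 0) y z →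
      (Tr (F.obj y) ↔ Tr (F.obj z)) := by
    intro y z h
    induction h with
    | rel a b hab =>
        obtain ⟨g, hg⟩ := hab
        have hFg : F.map g ≠ 0 := fun h0 =>
          hg (F_map_inj hFl hOut (h0.trans (lin_map_zero hFl).symm))
        constructor
        · intro htr v₁ v₂ h1 h2
          exact stepA hFl hOut hIn (F.map g) hFg htr v₂ v₁ h2 h1
        · intro htr v₁ v₂ h1 h2
          exact stepB hFl hOut hIn (F.map g) hFg htr v₂ v₁ h2 h1
    | refl a => exact Iff.rfl
    | symm a b _ ih => exact ih.symm
    | trans a b c _ _ ih1 ih2 => exact ih1.trans ih2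
  intro z₁ z₂ hzz
  have h1 : Tr b₀ := hgal
  have h2 := key y₀ z₁ (hconn y₀ z₁)
  rw [hy₀] at h2
  exact (h2.mp h1) z₁ z₂ rfl hzz.symm

end EulerAux

end EulerAux

theorem euler_derivation_inner_implies_character_zero (k : Type w) [Field k]
    {C : Type u} [Category.{v} C] [Preadditive C] [CategoryTheory.Linear k C]
    {B : Type u} [Category.{v} B] [Preadditive B] [CategoryTheory.Linear k B]
    (hend : ∀ (b : B) (e : b ⟶ b), ∃ r : k, e = r • 𝟙 b)
    (F : C ⥤ B) (hF : IsGaloisCovering k F)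
    (x : B → C) (hx : ∀ b : B, F.obj (x b) = b)
    (χ : (C ⥤ C) → k)
    (hχ : ∀ s t : C ⥤ C, MemAut1 k F s → MemAut1 k F t → χ (s ⋙ t) = χ s + χ t)
    (hinner : ∃ α : ∀ b : B, b ⟶ b, ∀ (s : C ⥤ C), MemAut1 k F s →
      ∀ (b c : B) (f : b ⟶ c), f ∈ gradeSet F x s b c →
        χ s • f = f ≫ α c - α b ≫ f) :
    ∀ s : C ⥤ C, MemAut1 k F s → χ s = 0 := by
  classical
  intro s hs
  obtain ⟨⟨hFlin, hFsurj, hOut, hIn⟩, hconn, b₀, hgal⟩ := hF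
  obtain ⟨α, hα⟩ := hinner
  letI : DecidableEq C := Classical.decEq C
  have chi_id : χ (𝟭 C) = 0 := by
    have h0 := hχ (𝟭 C) (𝟭 C) EulerAux.mem_id EulerAux.mem_id
    rw [Functor.id_comp] at h0
    exact left_eq_add.mp h0
  by_cases hdeg : ∀ b : B, (𝟙 b : b ⟶ b) ≠ 0
  · -- nondegenerate case
    choose r hr using fun b => hend b (α b)
    obtain ⟨y₀, hy₀⟩ := hFsurj b₀
    have FT := EulerAux.fibre_trans hFlin hOut hIn hconn hgal y₀ hy₀
    -- key relation
    have keyrel : ∀ u : C ⥤ C, MemAut1 k F u → ∀ (b c : B) (f' : x b ⟶ u.obj (x c)),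
        f' ≠ 0 → χ u = r c - r b := by
      intro u hu b c f' hf'
      have h₂ : F.obj (u.obj (x c)) = c := (Functor.congr_obj hu.2.2 (x c)).trans (hx c)
      set f : b ⟶ c := eqToHom (hx b).symm ≫ F.map f' ≫ eqToHom h₂ with hfdef
      have hmem : f ∈ gradeSet F x u b c := ⟨(hx b).symm, h₂, f', rfl⟩
      have hfne : f ≠ 0 := by
        intro h0
        apply hf'
        apply EulerAux.F_map_inj hFlin hOut (f := f') (g := 0)
        rw [EulerAux.lin_map_zero hFlin]
        have hFf : F.map f' = eqToHom (hx b) ≫ f ≫ eqToHom h₂.symm := by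
          rw [hfdef]; simp
        rw [hFf, h0, Limits.zero_comp, Limits.comp_zero]
      have heq := hα u hu b c f hmem
      rw [hr b, hr c, Linear.comp_smul, Category.comp_id, Linear.smul_comp,
        Category.id_comp] at heq
      have heq2 : (χ u - (r c - r b)) • f = 0 := by
        rw [sub_smul, sub_smul, heq]; abel
      by_contra hne
      apply hfne
      have hsub : χ u - (r c - r b) ≠ 0 := sub_ne_zero.mpr hne
      calc f = (χ u - (r c - r b))⁻¹ • ((χ u - (r c - r b)) • f) :=
            (inv_smul_smul₀ hsub f).symm
      _ = 0 := by rw [heq2, smul_zero]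
    have id_ne : ∀ b : B, (𝟙 (x b) : x b ⟶ x b) ≠ 0 := by
      intro b h0
      apply hdeg b
      have h1 : F.map (𝟙 (x b)) = F.map (0 : x b ⟶ x b) := by
        rw [h0]
      rw [F.map_id, EulerAux.lin_map_zero hFlin, hx b] at h1
      exact h1
    have stab : ∀ u : C ⥤ C, MemAut1 k F u → ∀ b : B, u.obj (x b) = x b → χ u = 0 := by
      intro u hu b hub
      have hf' : (eqToHom hub.symm : x b ⟶ u.obj (x b)) ≠ 0 := by
        intro h0
        apply id_ne b
        have h1 : (𝟙 (x b) : x b ⟶ x b) = eqToHom hub.symm ≫ eqToHom hub := by simp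
        rw [h1, h0, Limits.zero_comp]
      have h2 := keyrel u hu b b _ hf'
      simpa using h2
    -- constancy along connected chains
    have const : ∀ y z : C, Relation.EqvGen (fun a b : C => ∃ f : a ⟶ b, f ≠ 0) y z →
        ∀ (t u : C ⥤ C), MemAut1 k F t → MemAut1 k F u →
        t.obj (x (F.obj y)) = y → u.obj (x (F.obj z)) = z →
        r (F.obj y) - χ t = r (F.obj z) - χ u := by
      intro y z h
      induction h with
      | rel a b hab =>
          intro t u ht hu hta hub
          obtain ⟨g, hg⟩ := hab
          obtain ⟨ti, hti, h1, h2⟩ := EulerAux.mem_inv ht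
          have hchi_ti : χ t + χ ti = 0 := by
            have h3 := hχ t ti ht hti
            rw [h1, chi_id] at h3
            exact h3.symm
          have e : ti.obj a = x (F.obj a) := by
            have h5 : ti.obj (t.obj (x (F.obj a))) = x (F.obj a) :=
              Functor.congr_obj h1 (x (F.obj a))
            rwa [hta] at h5
          have ezb : ti.obj b = (u ⋙ ti).obj (x (F.obj b)) := by
            show _ = ti.obj (u.obj (x (F.obj b)))
            rw [hub]
          set f' : x (F.obj a) ⟶ (u ⋙ ti).obj (x (F.obj b)) :=
            eqToHom e.symm ≫ ti.map g ≫ eqToHom ezb with hf'def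
          have hf'ne : f' ≠ 0 := by
            intro h0
            apply hg
            have htig : ti.map g = eqToHom e ≫ f' ≫ eqToHom ezb.symm := by
              rw [hf'def]; simp
            rw [h0, Limits.zero_comp, Limits.comp_zero] at htig
            exact EulerAux.cancel_of_comp_id h2 ht.1 g htig
          have hk := keyrel (u ⋙ ti) (EulerAux.mem_comp hu hti) (F.obj a) (F.obj b) f' hf'ne
          have hadd := hχ u ti hu hti
          have hk2 : χ u + χ ti = r (F.obj b) - r (F.obj a) := by
            rw [← hadd]; exact hk
          linear_combination hk2 - hchi_ti
      | refl a =>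
          intro t u ht hu hta hua
          obtain ⟨ui, hui, h1, h2⟩ := EulerAux.mem_inv hu
          have hobj : (t ⋙ ui).obj (x (F.obj a)) = x (F.obj a) := by
            have h5 : ui.obj (u.obj (x (F.obj a))) = x (F.obj a) :=
              Functor.congr_obj h1 (x (F.obj a))
            rw [hua] at h5
            show ui.obj (t.obj (x (F.obj a))) = x (F.obj a)
            rw [hta]
            exact h5
          have h0 := stab (t ⋙ ui) (EulerAux.mem_comp ht hui) (F.obj a) hobj
          have hadd := hχ t ui ht hui
          have hft : χ t + χ ui = 0 := by rw [← hadd]; exact h0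
          have hcui : χ u + χ ui = 0 := by
            have h3 := hχ u ui hu hui
            rw [h1, chi_id] at h3
            exact h3.symm
          linear_combination hcui - hft
      | symm a b _ ih =>
          intro t u ht hu hta hub
          exact (ih u t hu ht hub hta).symm
      | trans a b c _ _ ih1 ih2 =>
          intro t u ht hu hta huc
          obtain ⟨w, hw, hwb⟩ := FT (x (F.obj b)) b (hx (F.obj b))
          exact (ih1 t w ht hw hta hwb).trans (ih2 w u hw hu hwb huc)
    -- conclude
    have hFs_obj : F.obj (s.obj (x b₀)) = b₀ :=
      (Functor.congr_obj hs.2.2 (x b₀)).trans (hx b₀)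
    have h1 : (𝟭 C).obj (x (F.obj (x b₀))) = x b₀ := by
      show x (F.obj (x b₀)) = x b₀
      rw [hx b₀]
    have h2 : s.obj (x (F.obj (s.obj (x b₀)))) = s.obj (x b₀) := by
      rw [hFs_obj]
    have h3 := const (x b₀) (s.obj (x b₀)) (hconn _ _) (𝟭 C) s
      EulerAux.mem_id hs h1 h2
    rw [chi_id, hx b₀, hFs_obj] at h3
    linear_combination h3
  · -- degenerate case: some identity is zero, C collapses
    push_neg at hdeg
    obtain ⟨b, hb⟩ := hdeg
    obtain ⟨y, hy⟩ := hFsurj b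
    have hidy : (𝟙 y : y ⟶ y) = 0 := by
      apply EulerAux.F_map_inj hFlin hOut
      rw [F.map_id, EulerAux.lin_map_zero hFlin, hy]
      exact hb
    have keyiso : ∀ a b' : C, Relation.EqvGen (fun p q : C => ∃ f : p ⟶ q, f ≠ 0) a b' →
        ((𝟙 a : a ⟶ a) = 0 → a = b') ∧ ((𝟙 b' : b' ⟶ b') = 0 → a = b') := by
      intro a b' h
      induction h with
      | rel p q hpq =>
          obtain ⟨f, hf⟩ := hpq
          constructor
          · intro h0; exact absurd (by rw [← Category.id_comp f, h0, Limits.zero_comp]) hf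
          · intro h0; exact absurd (by rw [← Category.comp_id f, h0, Limits.comp_zero]) hf
      | refl p => exact ⟨fun _ => rfl, fun _ => rfl⟩
      | symm p q _ ih => exact ⟨fun h0 => (ih.2 h0).symm, fun h0 => (ih.1 h0).symm⟩
      | trans p q m _ _ ih1 ih2 =>
          constructor
          · intro h0
            have e1 : p = q := ih1.1 h0
            have h0q : (𝟙 q : q ⟶ q) = 0 := by rw [← e1]; exact h0
            exact e1.trans (ih2.1 h0q)
          · intro h0
            have e2 : q = m := ih2.2 h0
            have h0q : (𝟙 q : q ⟶ q) = 0 := by rw [e2]; exact h0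
            exact (ih1.2 h0q).trans e2
    have hall : ∀ z : C, z = y := fun z => ((keyiso y z (hconn y z)).1 hidy).symm
    have hzero : ∀ (a b' : C) (f : a ⟶ b'), f = 0 := by
      intro a b' f
      have h0a : (𝟙 a : a ⟶ a) = 0 := by rw [hall a]; exact hidy
      rw [← Category.id_comp f, h0a, Limits.zero_comp]
    have hss : s ⋙ s = s := by
      have hobj : ∀ X : C, (s ⋙ s).obj X = s.obj X := fun X => (hall _).trans (hall _).symm
      exact CategoryTheory.Functor.ext hobj
        (fun X Y f => (hzero _ _ _).trans (hzero _ _ _).symm)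
    have h0 := hχ s s hs hs
    rw [hss] at h0
    exact left_eq_add.mp h0
end
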